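/- Let 𝐟 = f₁ ⊕ ⋯ ⊕ f_m on X^m and R the circular right shift. The dual solution set G = {y : 0 ∈ (∂𝐟)^{-1}(y) + (Id − R)^{-1}(y)} contains at most one element. -/

import Mathlib

open scoped RealInnerProductSpace

variable {X : Type*} [NormedAddCommGroup X] [InnerProductSpace ℝ X] [CompleteSpace X]
variable {m : ℕ} [NeZero m]

/-- The convex subdifferential. -/
def SubdiffAt {Y : Type*} [NormedAddCommGroup Y] [InnerProductSpace ℝ Y]
    (f : Y → EReal) (x : Y) : Set Y :=
  {u | ∀ y, f x + ((⟪u, y - x⟫ : ℝ) : EReal) ≤ f y}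

/-- A proper function: never `⊥` and not identically `⊤`. -/
def ProperE {Y : Type*} [NormedAddCommGroup Y] [InnerProductSpace ℝ Y]
    (f : Y → EReal) : Prop := (∀ x, f x ≠ ⊥) ∧ ∃ x, f x ≠ ⊤

/-- Convexity for extended-real-valued functions. -/
def EConvex {Y : Type*} [NormedAddCommGroup Y] [InnerProductSpace ℝ Y]
    (f : Y → EReal) : Prop :=
  ∀ x y : Y, ∀ a b : ℝ, 0 ≤ a → 0 ≤ b → a + b = 1 →
    f (a • x + b • y) ≤ (a : EReal) * f x + (b : EReal) * f y

/-- Membership in `Γ₀`. -/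
def Gamma0 {Y : Type*} [NormedAddCommGroup Y] [InnerProductSpace ℝ Y]
    (f : Y → EReal) : Prop := ProperE f ∧ LowerSemicontinuous f ∧ EConvex f

/-- The separable sum `𝐟 = f₁ ⊕ ⋯ ⊕ f_m` on `X^m`. -/
noncomputable def sepSum (f : Fin m → X → EReal) :
    PiLp 2 (fun _ : Fin m => X) → EReal := fun x => ∑ i, f i (x i)

/-- The circular right shift on `X^m`. -/
def shiftR : PiLp 2 (fun _ : Fin m => X) → PiLp 2 (fun _ : Fin m => X) :=
  fun x => WithLp.toLp 2 (fun j => x (j - 1))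

/-- The dual solution set `G = {y : 0 ∈ (∂𝐟)⁻¹(y) + (Id − R)⁻¹(y)}`. -/
def dualGap (f : Fin m → X → EReal) : Set (PiLp 2 (fun _ : Fin m => X)) :=
  {y | ∃ a b : PiLp 2 (fun _ : Fin m => X),
      y ∈ SubdiffAt (sepSum f) a ∧ b - shiftR b = y ∧ a + b = 0}

section aux
variable {ι : Type*} [Fintype ι]

lemma sum_ne_bot' (g : ι → EReal) (h : ∀ i, g i ≠ ⊥) : ∑ i, g i ≠ ⊥ := by
  classical
  induction (Finset.univ : Finset ι) using Finset.induction with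
  | empty => simp
  | insert hx ih => simp_all [EReal.add_eq_bot_iff]

lemma sum_ne_top' (g : ι → EReal) (h : ∀ i, g i ≠ ⊤) : ∑ i, g i ≠ ⊤ := by
  classical
  induction (Finset.univ : Finset ι) using Finset.induction with
  | empty => simp
  | @insert a s hx ih =>
    rw [Finset.sum_insert hx]
    exact (EReal.add_lt_top (h a) ih).ne
end aux

/-- The dual solution set contains at most one element. -/
theorem stmt_18 (f : Fin m → X → EReal) (hf : ∀ i, Gamma0 (f i)) :
    (dualGap f).Subsingleton := by
  rintro y ⟨a, b, ha, hb, hab⟩ y' ⟨a', b', ha', hb', hab'⟩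
  have hfbot : ∀ x, sepSum f x ≠ ⊥ := fun x =>
    sum_ne_bot' _ (fun i => (hf i).1.1 (x i))
  choose w hw using fun i => (hf i).1.2
  set z : PiLp 2 (fun _ : Fin m => X) := WithLp.toLp 2 (fun i => w i) with hzdef
  have hz : sepSum f z ≠ ⊤ := sum_ne_top' _ (fun i => hw i)
  have htop : ∀ (v u : PiLp 2 (fun _ : Fin m => X)),
      v ∈ SubdiffAt (sepSum f) u → sepSum f u ≠ ⊤ := by
    intro v u hv h
    have := hv z
    rw [h, EReal.top_add_of_ne_bot (EReal.coe_ne_bot _)] at this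
    exact hz (top_le_iff.mp this)
  set p := (sepSum f a).toReal with hpdef
  set q := (sepSum f a').toReal with hqdef
  have hp : (p : EReal) = sepSum f a := EReal.coe_toReal (htop _ _ ha) (hfbot a)
  have hq : (q : EReal) = sepSum f a' := EReal.coe_toReal (htop _ _ ha') (hfbot a')
  have h1 := ha a'
  have h2 := ha' a
  rw [← hp, ← hq, ← EReal.coe_add, EReal.coe_le_coe_iff] at h1
  rw [← hp, ← hq, ← EReal.coe_add, EReal.coe_le_coe_iff] at h2
  -- a = -b, a' = -b'
  have hA : a = -b := by linear_combination (norm := abel) hab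
  have hA' : a' = -b' := by linear_combination (norm := abel) hab'
  have hd : a' - a = b - b' := by rw [hA, hA']; abel
  have hd' : a - a' = -(b - b') := by rw [hA, hA']; abel
  set u : PiLp 2 (fun _ : Fin m => X) := b - b' with hudef
  have hmono : ⟪y - y', u⟫ ≤ 0 := by
    rw [hd] at h1
    rw [hd', inner_neg_right] at h2
    rw [inner_sub_left]
    linarith
  -- y - y' = u - shiftR u
  have hyy : y - y' = u - shiftR u := by
    rw [← hb, ← hb']
    have : shiftR u = shiftR b - shiftR b' := rfl
    rw [hudef, this]
    abel
  -- isometry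
  have hiso : ⟪shiftR u, shiftR u⟫ = ⟪u, u⟫ := by
    rw [PiLp.inner_apply, PiLp.inner_apply]
    exact Fintype.sum_equiv (Equiv.subRight (1 : Fin m)) _ _ (fun i => rfl)
  have hkey : 2 * ⟪u - shiftR u, u⟫ = ⟪u - shiftR u, u - shiftR u⟫ := by
    simp only [inner_sub_left, inner_sub_right]
    rw [real_inner_comm (shiftR u) u] at *
    linarith
  rw [hyy] at hmono
  have h0 : ⟪y - y', y - y'⟫ ≤ 0 := by rw [hyy, ← hkey]; linarith
  have : y - y' = 0 := by
    have := real_inner_self_nonpos.mp h0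
    exact this
  have := sub_eq_zero.mp this
  exact this
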